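/- For every real a ≥ 0, both of the following hold: Φ(a√3) − Φ(a√2) ≤ 0.049 and Φ(a√4) − Φ(a√3) ≤ 0.035. -/

import Mathlib

open MeasureTheory ProbabilityTheory Real

/-- The standard normal cumulative distribution function
`Φ(x) = (1/√(2π)) ∫_{-∞}^{x} e^{-t²/2} dt`. -/
noncomputable def stdGaussianCDF (x : ℝ) : ℝ :=
  (Real.sqrt (2 * Real.pi))⁻¹ * ∫ t in Set.Iic x, Real.exp (-t ^ 2 / 2)

/-- Weighted AM-GM consequence: `x^r (1-x) ≤ (r/(r+1))^(r+1) / r`, stated multiplied by `r`. -/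
lemma amgm19 {x r : ℝ} (hx0 : 0 ≤ x) (hx1 : x ≤ 1) (hr : 0 < r) :
    r * (x ^ r * (1 - x)) ≤ (r / (r + 1)) ^ (r + 1) := by
  have hr1 : (0:ℝ) < r + 1 := by linarith
  have h1x : (0:ℝ) ≤ 1 - x := by linarith
  have hp2 : (0:ℝ) ≤ r * (1 - x) := mul_nonneg hr.le h1x
  have h := Real.geom_mean_le_arith_mean2_weighted
    (le_of_lt (div_pos hr hr1)) (le_of_lt (div_pos one_pos hr1)) hx0 hp2
    (by field_simp)
  have hrhs : r / (r + 1) * x + 1 / (r + 1) * (r * (1 - x)) = r / (r + 1) := by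
    field_simp; ring
  rw [hrhs] at h
  have hL : (0:ℝ) ≤ x ^ (r / (r + 1)) * (r * (1 - x)) ^ (1 / (r + 1)) :=
    mul_nonneg (Real.rpow_nonneg hx0 _) (Real.rpow_nonneg hp2 _)
  have h2 := Real.rpow_le_rpow hL h hr1.le
  rw [Real.mul_rpow (Real.rpow_nonneg hx0 _) (Real.rpow_nonneg hp2 _),
    ← Real.rpow_mul hx0, ← Real.rpow_mul hp2] at h2
  have e1 : r / (r + 1) * (r + 1) = r := by field_simp
  have e2 : 1 / (r + 1) * (r + 1) = 1 := by field_simp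
  rw [e1, e2, Real.rpow_one] at h2
  calc r * (x ^ r * (1 - x)) = x ^ r * (r * (1 - x)) := by ring
    _ ≤ (r / (r + 1)) ^ (r + 1) := h2

lemma exp_half_le : Real.exp (1/2) ≤ 1.64873 := by
  have he : Real.exp (1/2) ^ 2 = Real.exp 1 := by
    rw [sq, ← Real.exp_add]; norm_num
  nlinarith [Real.exp_pos (1/2 : ℝ), Real.exp_one_lt_d9]

lemma sqrt_two_pi_ge : (2.5066 : ℝ) ≤ Real.sqrt (2 * Real.pi) := by
  have hs : Real.sqrt (2 * Real.pi) ^ 2 = 2 * Real.pi :=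
    Real.sq_sqrt (by positivity)
  nlinarith [Real.sqrt_nonneg (2 * Real.pi), Real.pi_gt_d6]

/-- numeric rpow bound for part 1 -/
lemma rpow_num1 : (0.8165 : ℝ) ^ (5.449 : ℝ) ≤ 0.33135 := by
  have key : ((0.8165 : ℝ) ^ (5.449 : ℝ)) ^ (1000 : ℕ) ≤ (0.33135 : ℝ) ^ (1000 : ℕ) := by
    rw [← Real.rpow_natCast ((0.8165 : ℝ) ^ (5.449 : ℝ)) 1000,
      ← Real.rpow_mul (by norm_num)]
    have h1 : (5.449 : ℝ) * (1000 : ℕ) = ((5449 : ℕ) : ℝ) := by norm_num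
    rw [h1, Real.rpow_natCast]
    norm_num
    rw [show (5449:ℕ) = 227 * 24 + 1 by norm_num, pow_add, pow_mul,
      show (1000:ℕ) = 250 * 4 by norm_num, pow_mul]
    norm_num
  exact le_of_pow_le_pow_left₀ (by norm_num) (by norm_num) key

/-- numeric rpow bound for part 2 -/
lemma rpow_num2 : (0.86605 : ℝ) ^ (7.464 : ℝ) ≤ 0.342 := by
  have key : ((0.86605 : ℝ) ^ (7.464 : ℝ)) ^ (1000 : ℕ) ≤ (0.342 : ℝ) ^ (1000 : ℕ) := by
    rw [← Real.rpow_natCast ((0.86605 : ℝ) ^ (7.464 : ℝ)) 1000,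
      ← Real.rpow_mul (by norm_num)]
    have h1 : (7.464 : ℝ) * (1000 : ℕ) = ((7464 : ℕ) : ℝ) := by norm_num
    rw [h1, Real.rpow_natCast]
    norm_num
    rw [show (7464:ℕ) = 250 * 29 + 214 by norm_num, pow_add, pow_mul,
      show (1000:ℕ) = 250 * 4 by norm_num, pow_mul]
    norm_num
  exact le_of_pow_le_pow_left₀ (by norm_num) (by norm_num) key

/-- key bound, part 1 -/
lemma key19_1 (a : ℝ) (ha : 0 ≤ a) :
    Real.exp (1/2) * (Real.exp (-(a * Real.sqrt 2)) - Real.exp (-(a * Real.sqrt 3))) ≤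
      0.049 * Real.sqrt (2 * Real.pi) := by
  have s2 : Real.sqrt 2 ^ 2 = 2 := Real.sq_sqrt (by norm_num)
  have s3 : Real.sqrt 3 ^ 2 = 3 := Real.sq_sqrt (by norm_num)
  have s6 : Real.sqrt 6 ^ 2 = 6 := Real.sq_sqrt (by norm_num)
  have s2n : (0:ℝ) ≤ Real.sqrt 2 := Real.sqrt_nonneg 2
  have s3n : (0:ℝ) ≤ Real.sqrt 3 := Real.sqrt_nonneg 3
  have s6n : (0:ℝ) ≤ Real.sqrt 6 := Real.sqrt_nonneg 6
  have h23 : Real.sqrt 2 ≤ Real.sqrt 3 := Real.sqrt_le_sqrt (by norm_num)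
  have h6 : Real.sqrt 6 = Real.sqrt 2 * Real.sqrt 3 := by
    rw [show (6:ℝ) = 2 * 3 by norm_num, Real.sqrt_mul (by norm_num)]
  have h6lb : (2.449 : ℝ) ≤ Real.sqrt 6 := by nlinarith
  have h6ub : Real.sqrt 6 / 3 ≤ 0.8165 := by nlinarith
  set c : ℝ := Real.sqrt 3 - Real.sqrt 2 with hc
  set r : ℝ := Real.sqrt 6 + 2 with hr
  have hc0 : 0 ≤ c := sub_nonneg.mpr h23
  have hr0 : (0:ℝ) < r := by rw [hr]; linarith
  have hcr : c * r = Real.sqrt 2 := by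
    rw [hc, hr, h6]; nlinarith [s2, s3]
  have hcr1 : c * (r + 1) = Real.sqrt 3 := by
    rw [hc, hr, h6]; nlinarith [s2, s3]
  set x : ℝ := Real.exp (-(c * a)) with hx
  have hx0 : 0 < x := Real.exp_pos _
  have hx1 : x ≤ 1 := by
    rw [hx, Real.exp_le_one_iff]
    nlinarith [mul_nonneg hc0 ha]
  have e2 : Real.exp (-(a * Real.sqrt 2)) = x ^ r := by
    rw [hx, ← Real.exp_mul]
    congr 1
    simp only [hc, hr]
    linear_combination (a * (Real.sqrt 3 - Real.sqrt 2)) * h6 + (a * Real.sqrt 2) * s3 -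
      (a * Real.sqrt 3) * s2
  have e3 : Real.exp (-(a * Real.sqrt 3)) = x ^ (r + 1) := by
    rw [hx, ← Real.exp_mul]
    congr 1
    simp only [hc, hr]
    linear_combination (a * (Real.sqrt 3 - Real.sqrt 2)) * h6 + (a * Real.sqrt 2) * s3 -
      (a * Real.sqrt 3) * s2
  have hsum : Real.exp (-(a * Real.sqrt 2)) - Real.exp (-(a * Real.sqrt 3))
      = x ^ r * (1 - x) := by
    have hx1' : x ^ (r + 1) = x ^ r * x := by
      rw [Real.rpow_add hx0, Real.rpow_one]
    rw [e2, e3, hx1']; ring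
  have hA := amgm19 hx0.le hx1 hr0
  have hmaxb : r / (r + 1) = Real.sqrt 6 / 3 := by
    rw [div_eq_div_iff (by linarith) (by norm_num), hr]
    linear_combination -s6
  have hstep : (r / (r + 1)) ^ (r + 1) ≤ 0.33135 := by
    rw [hmaxb]
    calc (Real.sqrt 6 / 3) ^ (r + 1) ≤ (0.8165 : ℝ) ^ (r + 1) :=
          Real.rpow_le_rpow (by positivity) h6ub (by rw [hr]; linarith)
      _ ≤ (0.8165 : ℝ) ^ (5.449 : ℝ) :=
          Real.rpow_le_rpow_of_exponent_ge (by norm_num) (by norm_num)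
            (by rw [hr]; linarith)
      _ ≤ 0.33135 := rpow_num1
  have hLnn : (0:ℝ) ≤ x ^ r * (1 - x) :=
    mul_nonneg (Real.rpow_nonneg hx0.le _) (by linarith)
  have hL : x ^ r * (1 - x) ≤ 0.33135 / 4.449 := by
    have h1 : x ^ r * (1 - x) ≤ 0.33135 / r := by
      rw [le_div_iff₀ hr0]
      calc x ^ r * (1 - x) * r = r * (x ^ r * (1 - x)) := by ring
        _ ≤ (r / (r + 1)) ^ (r + 1) := hA
        _ ≤ 0.33135 := hstep
    have h2 : (0.33135 : ℝ) / r ≤ 0.33135 / 4.449 :=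
      div_le_div_of_nonneg_left (by norm_num) (by norm_num) (by rw [hr]; linarith)
    linarith
  rw [hsum]
  calc Real.exp (1/2) * (x ^ r * (1 - x))
      ≤ 1.64873 * (0.33135 / 4.449) :=
        mul_le_mul exp_half_le hL hLnn (by norm_num)
    _ ≤ 0.049 * 2.5066 := by norm_num
    _ ≤ 0.049 * Real.sqrt (2 * Real.pi) := by
        nlinarith [sqrt_two_pi_ge]

/-- key bound, part 2 -/
lemma key19_2 (a : ℝ) (ha : 0 ≤ a) :
    Real.exp (1/2) * (Real.exp (-(a * Real.sqrt 3)) - Real.exp (-(a * Real.sqrt 4))) ≤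
      0.035 * Real.sqrt (2 * Real.pi) := by
  have s3 : Real.sqrt 3 ^ 2 = 3 := Real.sq_sqrt (by norm_num)
  have s3n : (0:ℝ) ≤ Real.sqrt 3 := Real.sqrt_nonneg 3
  have h4 : Real.sqrt 4 = 2 := by
    rw [show (4:ℝ) = 2 ^ 2 by norm_num]
    exact Real.sqrt_sq (by norm_num)
  have h3lb : (1.732 : ℝ) ≤ Real.sqrt 3 := by nlinarith
  have h3ub : Real.sqrt 3 ≤ 1.7321 := by nlinarith
  set c : ℝ := 2 - Real.sqrt 3 with hc
  set r : ℝ := 2 * Real.sqrt 3 + 3 with hr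
  have hc0 : 0 ≤ c := by rw [hc]; linarith
  have hr0 : (0:ℝ) < r := by rw [hr]; linarith
  have hcr : c * r = Real.sqrt 3 := by
    rw [hc, hr]; nlinarith [s3]
  have hcr1 : c * (r + 1) = 2 := by
    rw [hc, hr]; nlinarith [s3]
  set x : ℝ := Real.exp (-(c * a)) with hx
  have hx0 : 0 < x := Real.exp_pos _
  have hx1 : x ≤ 1 := by
    rw [hx, Real.exp_le_one_iff]
    nlinarith [mul_nonneg hc0 ha]
  have e2 : Real.exp (-(a * Real.sqrt 3)) = x ^ r := by
    rw [hx, ← Real.exp_mul]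
    congr 1
    simp only [hc, hr]
    linear_combination (-2 * a) * s3
  have e3 : Real.exp (-(a * Real.sqrt 4)) = x ^ (r + 1) := by
    rw [hx, ← Real.exp_mul, h4]
    congr 1
    simp only [hc, hr]
    linear_combination (-2 * a) * s3
  have hsum : Real.exp (-(a * Real.sqrt 3)) - Real.exp (-(a * Real.sqrt 4))
      = x ^ r * (1 - x) := by
    have hx1' : x ^ (r + 1) = x ^ r * x := by
      rw [Real.rpow_add hx0, Real.rpow_one]
    rw [e2, e3, hx1']; ring
  have hA := amgm19 hx0.le hx1 hr0
  have hmaxb : r / (r + 1) = Real.sqrt 3 / 2 := by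
    rw [div_eq_div_iff (by linarith) (by norm_num), hr]
    linear_combination -2 * s3
  have hstep : (r / (r + 1)) ^ (r + 1) ≤ 0.342 := by
    rw [hmaxb]
    calc (Real.sqrt 3 / 2) ^ (r + 1) ≤ (0.86605 : ℝ) ^ (r + 1) :=
          Real.rpow_le_rpow (by positivity) (by linarith) (by rw [hr]; linarith)
      _ ≤ (0.86605 : ℝ) ^ (7.464 : ℝ) :=
          Real.rpow_le_rpow_of_exponent_ge (by norm_num) (by norm_num)
            (by rw [hr]; linarith)
      _ ≤ 0.342 := rpow_num2
  have hLnn : (0:ℝ) ≤ x ^ r * (1 - x) :=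
    mul_nonneg (Real.rpow_nonneg hx0.le _) (by linarith)
  have hL : x ^ r * (1 - x) ≤ 0.342 / 6.464 := by
    have h1 : x ^ r * (1 - x) ≤ 0.342 / r := by
      rw [le_div_iff₀ hr0]
      calc x ^ r * (1 - x) * r = r * (x ^ r * (1 - x)) := by ring
        _ ≤ (r / (r + 1)) ^ (r + 1) := hA
        _ ≤ 0.342 := hstep
    have h2 : (0.342 : ℝ) / r ≤ 0.342 / 6.464 :=
      div_le_div_of_nonneg_left (by norm_num) (by norm_num) (by rw [hr]; linarith)
    linarith
  rw [hsum]
  calc Real.exp (1/2) * (x ^ r * (1 - x))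
      ≤ 1.64873 * (0.342 / 6.464) :=
        mul_le_mul exp_half_le hL hLnn (by norm_num)
    _ ≤ 0.035 * 2.5066 := by norm_num
    _ ≤ 0.035 * Real.sqrt (2 * Real.pi) := by
        nlinarith [sqrt_two_pi_ge]

/-- CDF difference bounded via the tangent-line exponential bound `e^{-t²/2} ≤ e^{1/2-t}`. -/
lemma cdf_diff_le (u v : ℝ) (huv : v ≤ u) :
    stdGaussianCDF u - stdGaussianCDF v ≤
      (Real.sqrt (2 * Real.pi))⁻¹ *
        (Real.exp (1/2) * (Real.exp (-v) - Real.exp (-u))) := by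
  have hcont : Continuous fun t : ℝ => Real.exp (-t ^ 2 / 2) := by fun_prop
  have hint : Integrable (fun t : ℝ => Real.exp (-t ^ 2 / 2)) := by
    have h := integrable_exp_neg_mul_sq (b := (1/2 : ℝ)) (by norm_num)
    have heq : (fun t : ℝ => Real.exp (-t ^ 2 / 2)) =
        fun t : ℝ => Real.exp (-(1/2) * t ^ 2) := by
      funext t; ring_nf
    rw [heq]; exact h
  unfold stdGaussianCDF
  rw [← mul_sub,
    intervalIntegral.integral_Iic_sub_Iic hint.integrableOn hint.integrableOn]
  apply mul_le_mul_of_nonneg_left _ (inv_nonneg.mpr (Real.sqrt_nonneg _))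
  calc (∫ t in v..u, Real.exp (-t ^ 2 / 2))
      ≤ ∫ t in v..u, Real.exp (1/2 - t) := by
        apply intervalIntegral.integral_mono_on huv
          (hcont.intervalIntegrable v u)
          ((by fun_prop : Continuous fun t : ℝ => Real.exp (1/2 - t)).intervalIntegrable v u)
        intro t _
        apply Real.exp_le_exp.mpr
        nlinarith [sq_nonneg (t - 1)]
    _ = Real.exp (1/2) * (Real.exp (-v) - Real.exp (-u)) := by
        have hsplit : ∀ t : ℝ, Real.exp (1/2 - t) = Real.exp (1/2) * Real.exp (-t) := by
          intro t; rw [← Real.exp_add]; ring_nf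
        simp_rw [hsplit]
        rw [intervalIntegral.integral_const_mul]
        congr 1
        rw [intervalIntegral.integral_comp_neg (fun s => Real.exp s),
          integral_exp]

theorem stmt19 (a : ℝ) (ha : 0 ≤ a) :
    stdGaussianCDF (a * Real.sqrt 3) - stdGaussianCDF (a * Real.sqrt 2) ≤ 0.049
      ∧ stdGaussianCDF (a * Real.sqrt 4) - stdGaussianCDF (a * Real.sqrt 3) ≤ 0.035 := by
  have hs : (0:ℝ) < Real.sqrt (2 * Real.pi) := Real.sqrt_pos.mpr (by positivity)
  constructor
  · have huv : a * Real.sqrt 2 ≤ a * Real.sqrt 3 :=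
      mul_le_mul_of_nonneg_left (Real.sqrt_le_sqrt (by norm_num)) ha
    calc stdGaussianCDF (a * Real.sqrt 3) - stdGaussianCDF (a * Real.sqrt 2)
        ≤ (Real.sqrt (2 * Real.pi))⁻¹ *
            (Real.exp (1/2) * (Real.exp (-(a * Real.sqrt 2)) - Real.exp (-(a * Real.sqrt 3)))) :=
          cdf_diff_le _ _ huv
      _ ≤ (Real.sqrt (2 * Real.pi))⁻¹ * (0.049 * Real.sqrt (2 * Real.pi)) :=
          mul_le_mul_of_nonneg_left (key19_1 a ha) (inv_nonneg.mpr hs.le)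
      _ = 0.049 := by
          rw [mul_comm (0.049:ℝ), ← mul_assoc, inv_mul_cancel₀ hs.ne', one_mul]
  · have huv : a * Real.sqrt 3 ≤ a * Real.sqrt 4 :=
      mul_le_mul_of_nonneg_left (Real.sqrt_le_sqrt (by norm_num)) ha
    calc stdGaussianCDF (a * Real.sqrt 4) - stdGaussianCDF (a * Real.sqrt 3)
        ≤ (Real.sqrt (2 * Real.pi))⁻¹ *
            (Real.exp (1/2) * (Real.exp (-(a * Real.sqrt 3)) - Real.exp (-(a * Real.sqrt 4)))) :=
          cdf_diff_le _ _ huv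
      _ ≤ (Real.sqrt (2 * Real.pi))⁻¹ * (0.035 * Real.sqrt (2 * Real.pi)) :=
          mul_le_mul_of_nonneg_left (key19_2 a ha) (inv_nonneg.mpr hs.le)
      _ = 0.035 := by
          rw [mul_comm (0.035:ℝ), ← mul_assoc, inv_mul_cancel₀ hs.ne', one_mul]
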